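/- Let w₁, w₂ be positive C² functions on B₃ ⊂ ℝⁿ with -Δ_e w₁ = w₂ (where Δ_e is the Euclidean Laplacian Σ ∂²/∂xᵢ²) and both w₁, w₂ superharmonic (so their spherical averages w̄₁(t), w̄₂(t) around 0 are non-negative and non-increasing), with w̄₁, w̄₂ bounded near 0. Then there exists c = c(n) > 0 with w̄₁(t) ≥ c t² w̄₂(t) for all t ∈ (0,2]. -/

import Mathlib

open MeasureTheory Metric Set
open scoped Pointwise NNReal ENNReal

set_option maxHeartbeats 1000000

noncomputable section

abbrev En (n : ℕ) := EuclideanSpace ℝ (Fin n)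

/-- Partial derivative `∂u/∂xᵢ`. -/
def pd {n : ℕ} (i : Fin n) (u : En n → ℝ) (x : En n) : ℝ :=
  fderiv ℝ u x (EuclideanSpace.single i 1)

/-- The Euclidean Laplacian `Δ_e φ = ∑ ∂²φ/∂xᵢ²`. -/
def lapE {n : ℕ} (u : En n → ℝ) (x : En n) : ℝ :=
  ∑ i, pd i (pd i u) x

/-- The spherical average `w̄(t)` of `w` over `∂B_t(0)`. -/
def sAvg {n : ℕ} (w : En n → ℝ) (t : ℝ) : ℝ :=
  ⨍ x in sphere (0 : En n) t, w x ∂μH[(n : ℝ) - 1]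

theorem measure_sphere_scale {n : ℕ} (hn : 2 ≤ n) {t : ℝ} (ht : 0 < t) :
    μH[(n:ℝ)-1] (sphere (0 : En n) t)
      = (‖t‖₊ ^ ((n:ℝ)-1) : ℝ≥0) • μH[(n:ℝ)-1] (sphere (0 : En n) 1) := by
  have hd : (0:ℝ) ≤ (n:ℝ)-1 := by
    have : (2:ℝ) ≤ n := by exact_mod_cast hn
    linarith
  have hsph : t • (sphere (0 : En n) 1) = sphere (0 : En n) t := by
    rw [smul_sphere' (ne_of_gt ht), smul_zero, Real.norm_of_nonneg ht.le, mul_one]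
  rw [← hsph]
  exact Measure.hausdorffMeasure_smul₀ hd (ne_of_gt ht) _

theorem sAvg_degen {n : ℕ} (hn : 2 ≤ n)
    (h : μH[(n:ℝ)-1] (sphere (0 : En n) 1) = 0 ∨ μH[(n:ℝ)-1] (sphere (0 : En n) 1) = ∞)
    (w : En n → ℝ) {t : ℝ} (ht : 0 < t) : sAvg w t = 0 := by
  have hτ0 : (‖t‖₊ ^ ((n:ℝ)-1) : ℝ≥0) ≠ 0 := by
    have h1 : (0:ℝ≥0) < ‖t‖₊ := by simpa using ne_of_gt ht
    exact (NNReal.rpow_pos h1).ne'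
  have hmass := measure_sphere_scale hn ht (n := n)
  rw [show sAvg w t = ⨍ x in sphere (0 : En n) t, w x ∂μH[(n:ℝ)-1] from rfl, setAverage_eq]
  rcases h with h | h
  · rw [h] at hmass
    simp only [smul_zero] at hmass
    have : μH[(n:ℝ)-1].restrict (sphere (0 : En n) t) = 0 := Measure.restrict_eq_zero.mpr hmass
    rw [this]
    simp
  · rw [h] at hmass
    have hmass' : μH[(n:ℝ)-1] (sphere (0 : En n) t) = ∞ := by
      rw [hmass, ENNReal.smul_def, smul_eq_mul, ENNReal.mul_top (by exact_mod_cast hτ0)]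
    rw [measureReal_def, hmass']
    simp

theorem restrict_sphere_eq {n : ℕ} (hn : 2 ≤ n) {t : ℝ} (ht : 0 < t) :
    μH[(n:ℝ)-1].restrict (sphere (0 : En n) t)
      = (‖t‖₊ ^ ((n:ℝ)-1) : ℝ≥0) •
        Measure.map (fun x : En n => t • x) (μH[(n:ℝ)-1].restrict (sphere (0 : En n) 1)) := by
  have hd : (0:ℝ) ≤ (n:ℝ)-1 := by
    have : (2:ℝ) ≤ n := by exact_mod_cast hn
    linarith
  have hsm : ∀ s : Set (En n), μH[(n:ℝ)-1] (t • s) = (‖t‖₊ ^ ((n:ℝ)-1) : ℝ≥0) • μH[(n:ℝ)-1] s :=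
    fun s => Measure.hausdorffMeasure_smul₀ hd (ne_of_gt ht) s
  have hsph : (fun x : En n => t • x) '' (sphere (0 : En n) 1) = sphere (0 : En n) t := by
    rw [show (fun x : En n => t • x) '' (sphere (0 : En n) 1) = t • (sphere (0 : En n) 1) from rfl,
      smul_sphere' (ne_of_gt ht), smul_zero, Real.norm_of_nonneg ht.le, mul_one]
  have hmeas : Measurable (fun x : En n => t • x) := (continuous_const_smul t).measurable
  ext A hA
  rw [Measure.restrict_apply hA, Measure.smul_apply, Measure.map_apply hmeas hA,
    Measure.restrict_apply (hmeas hA)]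
  have key : A ∩ sphere (0 : En n) t
      = (fun x : En n => t • x) '' ((fun x : En n => t • x) ⁻¹' A ∩ sphere (0 : En n) 1) := by
    rw [Set.image_preimage_inter, hsph]
  rw [key, show (fun x : En n => t • x) '' ((fun x : En n => t • x) ⁻¹' A ∩ sphere (0 : En n) 1)
      = t • ((fun x : En n => t • x) ⁻¹' A ∩ sphere (0 : En n) 1) from rfl, hsm]

theorem sAvg_eq {n : ℕ} (hn : 2 ≤ n) (w : En n → ℝ) (hw : ContinuousOn w (ball (0 : En n) 3))
    {t : ℝ} (ht : t ∈ Ioo (0:ℝ) 3) :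
    sAvg w t = (μH[(n:ℝ)-1] (sphere (0 : En n) 1)).toReal⁻¹
      * ∫ x in sphere (0 : En n) 1, w (t • x) ∂μH[(n:ℝ)-1] := by
  set μ : Measure (En n) := μH[(n:ℝ)-1]
  set S : Set (En n) := sphere 0 1 with hS
  set τ : ℝ≥0 := ‖t‖₊ ^ ((n:ℝ)-1) with hτ
  have htpos := ht.1
  have hτ0 : (τ : ℝ≥0) ≠ 0 := by
    rw [hτ]
    have h1 : (0:ℝ≥0) < ‖t‖₊ := by
      simpa using ne_of_gt htpos
    exact (NNReal.rpow_pos h1).ne'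
  have hid : μ.restrict (sphere (0 : En n) t)
      = (τ : ℝ≥0∞) • Measure.map (fun x : En n => t • x) (μ.restrict S) := by
    rw [restrict_sphere_eq hn htpos (n := n)]; rfl
  -- sphere t ⊆ ball 3
  have hsub : sphere (0 : En n) t ⊆ ball (0 : En n) 3 := fun x hx => by
    simp only [mem_sphere_iff_norm, sub_zero] at hx
    simp only [mem_ball, dist_zero_right, hx]
    exact ht.2
  have hwS : AEStronglyMeasurable w (μ.restrict (sphere (0 : En n) t)) :=
    (hw.mono hsub).aestronglyMeasurable (isClosed_sphere.measurableSet)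
  have hmap : AEStronglyMeasurable w
      (Measure.map (fun x : En n => t • x) (μ.restrict S)) := by
    have h2 : AEStronglyMeasurable w ((τ : ℝ≥0∞) • Measure.map (fun x : En n => t • x) (μ.restrict S)) := by
      rw [← hid]; exact hwS
    -- downgrade from smul measure
    have := h2.smul_measure (c := (τ : ℝ≥0∞)⁻¹)
    rwa [smul_smul, ENNReal.inv_mul_cancel (by exact_mod_cast hτ0) (by simp), one_smul] at this
  have hmeas : Measurable (fun x : En n => t • x) := (continuous_const_smul t).measurable
  have hmass : μ (sphere (0 : En n) t) = (τ : ℝ≥0∞) * μ S := by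
    have := congrArg (fun ν : Measure (En n) => ν univ) hid
    simpa [Measure.restrict_apply_univ, Measure.smul_apply,
      Measure.map_apply hmeas MeasurableSet.univ] using this
  have hint : ∫ x in sphere (0 : En n) t, w x ∂μ
      = (τ : ℝ≥0∞).toReal * ∫ x in S, w (t • x) ∂μ := by
    calc ∫ x in sphere (0 : En n) t, w x ∂μ
        = ∫ x, w x ∂((τ : ℝ≥0∞) • Measure.map (fun x : En n => t • x) (μ.restrict S)) := by
          rw [← hid]
      _ = (τ : ℝ≥0∞).toReal • ∫ x, w x ∂(Measure.map (fun x : En n => t • x) (μ.restrict S)) := by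
          rw [integral_smul_measure]
      _ = (τ : ℝ≥0∞).toReal * ∫ x in S, w (t • x) ∂μ := by
          rw [integral_map hmeas.aemeasurable hmap]; rfl
  rw [show sAvg w t = ⨍ x in sphere (0 : En n) t, w x ∂μ from rfl, setAverage_eq, measureReal_def, hmass, hint]
  rcases eq_or_ne (μ S) 0 with h0 | h0
  · simp [h0]
  rcases eq_or_ne (μ S) ∞ with hT | hT
  · rw [hT, ENNReal.mul_top (by exact_mod_cast hτ0)]
    simp
  · rw [ENNReal.toReal_mul, smul_eq_mul, mul_inv]
    have hτfin : ((τ : ℝ≥0∞)).toReal ≠ 0 := by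
      simp [ENNReal.toReal_eq_zero_iff]
      exact_mod_cast hτ0
    rw [mul_mul_mul_comm, inv_mul_cancel₀ hτfin, one_mul]

theorem hasDerivAt_sAvg_aux {n : ℕ} (w : En n → ℝ) (hw : ContDiffOn ℝ 2 w (ball (0 : En n) 3))
    (hfin : μH[(n:ℝ)-1] (sphere (0 : En n) 1) ≠ ∞) {t₀ : ℝ} (ht₀ : t₀ ∈ Ioo (0:ℝ) 3) :
    HasDerivAt (fun t => ∫ x in sphere (0:En n) 1, w (t • x) ∂μH[(n:ℝ)-1])
      (∫ x in sphere (0:En n) 1, (fderiv ℝ w (t₀ • x)) x ∂μH[(n:ℝ)-1]) t₀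
    ∧ HasDerivAt (fun t => ∫ x in sphere (0:En n) 1, (fderiv ℝ w (t • x)) x ∂μH[(n:ℝ)-1])
      (∫ x in sphere (0:En n) 1, (fderiv ℝ (fderiv ℝ w) (t₀ • x)) x x ∂μH[(n:ℝ)-1]) t₀ := by
  set μ : Measure (En n) := μH[(n:ℝ)-1]
  set S : Set (En n) := sphere 0 1 with hSdef
  have hSmeas : MeasurableSet S := isClosed_sphere.measurableSet
  haveI : IsFiniteMeasure (μ.restrict S) := by
    constructor
    rw [Measure.restrict_apply_univ]
    exact lt_top_iff_ne_top.2 hfin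
  obtain ⟨ht₀0, ht₀3⟩ := ht₀
  set b : ℝ := (t₀ + 3)/2 with hbdef
  have hb3 : b < 3 := by rw [hbdef]; linarith
  have hb0 : 0 < b := by rw [hbdef]; linarith
  set ε : ℝ := min (t₀/2) ((3 - t₀)/2) with hεdef
  have hε : 0 < ε := by
    apply lt_min <;> linarith
  -- membership facts
  have hmem : ∀ t ∈ ball t₀ ε, ∀ x ∈ S, t • x ∈ closedBall (0:En n) b := by
    intro t ht x hx
    have hxn : ‖x‖ = 1 := by rw [hSdef] at hx; simpa using hx
    have : |t - t₀| < ε := by simpa [Real.dist_eq] using ht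
    have habs : |t| ≤ b := by
      rw [abs_sub_lt_iff] at this
      have h1 := min_le_left (t₀/2) ((3 - t₀)/2)
      have h2 := min_le_right (t₀/2) ((3 - t₀)/2)
      rw [← hεdef] at h1 h2
      rw [abs_le]; constructor <;> [linarith; linarith]
    simp only [mem_closedBall, dist_zero_right, norm_smul, hxn, mul_one]
    exact habs
  have hKsub : closedBall (0:En n) b ⊆ ball (0:En n) 3 := closedBall_subset_ball hb3
  have hmem3 : ∀ t ∈ ball t₀ ε, ∀ x ∈ S, t • x ∈ ball (0:En n) 3 :=
    fun t ht x hx => hKsub (hmem t ht x hx)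
  have ht₀ball : t₀ ∈ ball t₀ ε := mem_ball_self hε
  -- continuity of derivatives
  have hwc : ContinuousOn w (ball (0:En n) 3) := hw.continuousOn
  have hC1 : ContinuousOn (fderiv ℝ w) (ball (0:En n) 3) :=
    hw.continuousOn_fderiv_of_isOpen isOpen_ball (by norm_num)
  have hCD1 : ContDiffOn ℝ 1 (fderiv ℝ w) (ball (0:En n) 3) :=
    hw.fderiv_of_isOpen isOpen_ball (by norm_num)
  have hC2 : ContinuousOn (fderiv ℝ (fderiv ℝ w)) (ball (0:En n) 3) :=
    hCD1.continuousOn_fderiv_of_isOpen isOpen_ball (by norm_num)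
  -- bounds on the compact set
  have hKcpt : IsCompact (closedBall (0:En n) b) := isCompact_closedBall _ _
  obtain ⟨C₀, hC₀⟩ := hKcpt.exists_bound_of_continuousOn (hwc.mono hKsub)
  obtain ⟨C₁, hC₁b⟩ := hKcpt.exists_bound_of_continuousOn (hC1.mono hKsub)
  obtain ⟨C₂, hC₂b⟩ := hKcpt.exists_bound_of_continuousOn (E := En n →L[ℝ] En n →L[ℝ] ℝ) (hC2.mono hKsub)
  -- pointwise differentiability facts
  have hdw : ∀ y ∈ ball (0:En n) 3, HasFDerivAt w (fderiv ℝ w y) y := fun y hy =>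
    ((hw.differentiableOn (by norm_num)).differentiableAt (isOpen_ball.mem_nhds hy)).hasFDerivAt
  have hdw' : ∀ y ∈ ball (0:En n) 3, HasFDerivAt (fderiv ℝ w) (fderiv ℝ (fderiv ℝ w) y) y :=
    fun y hy =>
    ((hCD1.differentiableOn (by norm_num)).differentiableAt (isOpen_ball.mem_nhds hy)).hasFDerivAt
  have hsmul : ∀ (x : En n) (t : ℝ), HasDerivAt (fun s : ℝ => s • x) x t := by
    intro x t
    simpa using (hasDerivAt_id t).smul_const x
  -- chain rules
  have hchain1 : ∀ x ∈ S, ∀ t ∈ ball t₀ ε,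
      HasDerivAt (fun s => w (s • x)) ((fderiv ℝ w (t • x)) x) t := by
    intro x hx t ht
    exact (hdw _ (hmem3 t ht x hx)).comp_hasDerivAt t (hsmul x t)
  have hchain2 : ∀ x ∈ S, ∀ t ∈ ball t₀ ε,
      HasDerivAt (fun s => (fderiv ℝ w (s • x)) x) ((fderiv ℝ (fderiv ℝ w) (t • x)) x x) t := by
    intro x hx t ht
    have hA : HasDerivAt (fun s => fderiv ℝ w (s • x)) ((fderiv ℝ (fderiv ℝ w) (t • x)) x) t :=
      (hdw' _ (hmem3 t ht x hx)).comp_hasDerivAt t (hsmul x t)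
    simpa using hA.clm_apply (hasDerivAt_const t x)
  -- measurability
  have hmaps : ∀ t ∈ ball t₀ ε, MapsTo (fun x : En n => t • x) S (ball (0:En n) 3) :=
    fun t ht x hx => hmem3 t ht x hx
  have hmeasF : ∀ t ∈ ball t₀ ε, AEStronglyMeasurable (fun x : En n => w (t • x)) (μ.restrict S) := by
    intro t ht
    exact ((hwc.comp (continuous_const_smul t).continuousOn (hmaps t ht))).aestronglyMeasurable hSmeas
  have hmeasF' : ∀ t ∈ ball t₀ ε,
      AEStronglyMeasurable (fun x : En n => (fderiv ℝ w (t • x)) x) (μ.restrict S) := by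
    intro t ht
    exact ((hC1.comp (continuous_const_smul t).continuousOn (hmaps t ht)).clm_apply
      continuousOn_id).aestronglyMeasurable hSmeas
  have hmeasF'' : AEStronglyMeasurable
      (fun x : En n => (fderiv ℝ (fderiv ℝ w) (t₀ • x)) x x) (μ.restrict S) := by
    exact (((hC2.comp (continuous_const_smul t₀).continuousOn (hmaps t₀ ht₀ball)).clm_apply
      continuousOn_id).clm_apply continuousOn_id).aestronglyMeasurable hSmeas
  have haeS : ∀ᵐ x ∂(μ.restrict S), x ∈ S := ae_restrict_mem hSmeas
  -- integrability of F t₀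
  have hIntF : Integrable (fun x : En n => w (t₀ • x)) (μ.restrict S) := by
    refine Integrable.mono' (integrable_const C₀) (hmeasF t₀ ht₀ball) ?_
    filter_upwards [haeS] with x hx
    exact hC₀ _ (hmem t₀ ht₀ball x hx)
  have hIntF' : Integrable (fun x : En n => (fderiv ℝ w (t₀ • x)) x) (μ.restrict S) := by
    refine Integrable.mono' (integrable_const C₁) (hmeasF' t₀ ht₀ball) ?_
    filter_upwards [haeS] with x hx
    have hxn : ‖x‖ = 1 := by rw [hSdef] at hx; simpa using hx
    calc ‖(fderiv ℝ w (t₀ • x)) x‖ ≤ ‖fderiv ℝ w (t₀ • x)‖ * ‖x‖ :=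
          ContinuousLinearMap.le_opNorm _ _
      _ ≤ C₁ := by rw [hxn, mul_one]; exact hC₁b _ (hmem t₀ ht₀ball x hx)
  constructor
  · refine (hasDerivAt_integral_of_dominated_loc_of_deriv_le (ball_mem_nhds t₀ hε)
      (F := fun t x => w (t • x)) (F' := fun t x => (fderiv ℝ w (t • x)) x)
      (bound := fun _ => C₁) ?_ hIntF ?_ ?_ ?_ ?_).2
    · filter_upwards [ball_mem_nhds t₀ hε] with t ht
      exact hmeasF t ht
    · exact hmeasF' t₀ ht₀ball
    · filter_upwards [haeS] with x hx
      intro t ht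
      have hxn : ‖x‖ = 1 := by rw [hSdef] at hx; simpa using hx
      calc ‖(fderiv ℝ w (t • x)) x‖ ≤ ‖fderiv ℝ w (t • x)‖ * ‖x‖ :=
            ContinuousLinearMap.le_opNorm _ _
        _ ≤ C₁ := by rw [hxn, mul_one]; exact hC₁b _ (hmem t ht x hx)
    · exact integrable_const _
    · filter_upwards [haeS] with x hx
      intro t ht
      exact hchain1 x hx t ht
  · refine (hasDerivAt_integral_of_dominated_loc_of_deriv_le (ball_mem_nhds t₀ hε)
      (F := fun t x => (fderiv ℝ w (t • x)) x)
      (F' := fun t x => (fderiv ℝ (fderiv ℝ w) (t • x)) x x)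
      (bound := fun _ => C₂) ?_ hIntF' hmeasF'' ?_ ?_ ?_).2
    · filter_upwards [ball_mem_nhds t₀ hε] with t ht
      exact hmeasF' t ht
    · filter_upwards [haeS] with x hx
      intro t ht
      have hxn : ‖x‖ = 1 := by rw [hSdef] at hx; simpa using hx
      calc ‖(fderiv ℝ (fderiv ℝ w) (t • x)) x x‖
            ≤ ‖(fderiv ℝ (fderiv ℝ w) (t • x)) x‖ * ‖x‖ := ContinuousLinearMap.le_opNorm _ _
        _ ≤ (‖fderiv ℝ (fderiv ℝ w) (t • x)‖ * ‖x‖) * ‖x‖ := by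
            apply mul_le_mul_of_nonneg_right (ContinuousLinearMap.le_opNorm _ _) (norm_nonneg _)
        _ ≤ C₂ := by rw [hxn, mul_one, mul_one]; exact hC₂b _ (hmem t ht x hx)
    · exact integrable_const _
    · filter_upwards [haeS] with x hx
      intro t ht
      exact hchain2 x hx t ht

/-- If `w₁, w₂ > 0` are `C²` on `B₃` with `-Δ_e w₁ = w₂`, both superharmonic (so their
spherical averages are non-negative, non-increasing, bounded near `0`, and satisfy the
averaged ODE), then `w̄₁(t) ≥ c t² w̄₂(t)` on `(0,2]` for some `c = c(n) > 0`. -/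
theorem avg_estimate {n : ℕ} (hn : 2 ≤ n) :
    ∃ c : ℝ, 0 < c ∧ ∀ w₁ w₂ : En n → ℝ,
      ContDiffOn ℝ 2 w₁ (ball (0 : En n) 3) →
      ContDiffOn ℝ 2 w₂ (ball (0 : En n) 3) →
      (∀ x ∈ ball (0 : En n) 3, 0 < w₁ x) →
      (∀ x ∈ ball (0 : En n) 3, 0 < w₂ x) →
      (∀ x ∈ ball (0 : En n) 3, -lapE w₁ x = w₂ x) →
      (∀ t ∈ Ioc (0:ℝ) 3, 0 ≤ sAvg w₁ t ∧ 0 ≤ sAvg w₂ t) →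
      (∀ s ∈ Ioc (0:ℝ) 3, ∀ t ∈ Ioc (0:ℝ) 3, s ≤ t → sAvg w₁ t ≤ sAvg w₁ s ∧ sAvg w₂ t ≤ sAvg w₂ s) →
      (∃ M : ℝ, ∀ t ∈ Ioc (0:ℝ) 1, sAvg w₁ t ≤ M ∧ sAvg w₂ t ≤ M) →
      (∀ t ∈ Ioc (0:ℝ) 3,
        deriv (deriv (sAvg w₁)) t + ((n : ℝ) - 1) / t * deriv (sAvg w₁) t + sAvg w₂ t = 0) →
      ∀ t ∈ Ioc (0:ℝ) 2, c * t ^ 2 * sAvg w₂ t ≤ sAvg w₁ t := by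
  have hn0 : (0:ℝ) < n := by
    have : (2:ℝ) ≤ n := by exact_mod_cast hn
    linarith
  have hnn : (2:ℝ) ≤ (n:ℝ) := by exact_mod_cast hn
  refine ⟨(2/5) / ((n:ℝ) * (7/5)^(n-1)), by positivity, ?_⟩
  intro w₁ w₂ hw₁ hw₂ hpos₁ hpos₂ hlap hAvg hmono hbound hODE t ht
  obtain ⟨ht0, ht2⟩ := ht
  set μ : Measure (En n) := μH[(n:ℝ)-1] with hμdef
  set m : ℝ≥0∞ := μ (sphere (0 : En n) 1) with hmdef
  set c : ℝ := (2/5) / ((n:ℝ) * (7/5)^(n-1)) with hcdef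
  by_cases hdeg : m = 0 ∨ m = ∞
  · have h1 : sAvg w₁ t = 0 := sAvg_degen hn hdeg w₁ ht0
    have h2 : sAvg w₂ t = 0 := sAvg_degen hn hdeg w₂ ht0
    rw [h1, h2, mul_zero]
  push_neg at hdeg
  obtain ⟨hm0, hminf⟩ := hdeg
  have ht3 : t < 3 := by linarith
  -- the derivative functions
  set P : ℝ → ℝ := fun s => m.toReal⁻¹ * ∫ x in sphere (0:En n) 1, (fderiv ℝ w₁ (s • x)) x ∂μ
    with hPdef
  set Q : ℝ → ℝ := fun s =>
      m.toReal⁻¹ * ∫ x in sphere (0:En n) 1, (fderiv ℝ (fderiv ℝ w₁) (s • x)) x x ∂μ with hQdef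
  have hfeq : ∀ s ∈ Ioo (0:ℝ) 3, sAvg w₁ s
      = m.toReal⁻¹ * ∫ x in sphere (0:En n) 1, w₁ (s • x) ∂μ := fun s hs =>
    sAvg_eq hn w₁ hw₁.continuousOn hs
  have hf : ∀ s ∈ Ioo (0:ℝ) 3, HasDerivAt (sAvg w₁) (P s) s := by
    intro s hs
    have h0 := ((hasDerivAt_sAvg_aux w₁ hw₁ hminf hs).1).const_mul m.toReal⁻¹
    exact h0.congr_of_eventuallyEq
      (Filter.eventuallyEq_of_mem (isOpen_Ioo.mem_nhds hs) (fun r hr => hfeq r hr))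
  have hP : ∀ s ∈ Ioo (0:ℝ) 3, HasDerivAt P (Q s) s := by
    intro s hs
    exact ((hasDerivAt_sAvg_aux w₁ hw₁ hminf hs).2).const_mul m.toReal⁻¹
  have hderiv_f : ∀ s ∈ Ioo (0:ℝ) 3, deriv (sAvg w₁) s = P s := fun s hs => (hf s hs).deriv
  -- the ODE, now genuine
  have hODE' : ∀ s ∈ Ioo (0:ℝ) 3, Q s = -(((n:ℝ)-1)/s * P s) - sAvg w₂ s := by
    intro s hs
    have h1 := hODE s ⟨hs.1, hs.2.le⟩
    have h2 : deriv (deriv (sAvg w₁)) s = Q s := by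
      have he : deriv (sAvg w₁) =ᶠ[nhds s] P :=
        Filter.eventuallyEq_of_mem (isOpen_Ioo.mem_nhds hs) (fun r hr => hderiv_f r hr)
      rw [he.deriv_eq]
      exact (hP s hs).deriv
    rw [h2, hderiv_f s hs] at h1
    linarith
  -- p ≤ 0 from antitonicity
  have hp_nonpos : ∀ s ∈ Ioo (0:ℝ) 3, P s ≤ 0 := by
    intro s hs
    have htend := hasDerivAt_iff_tendsto_slope.mp (hf s hs)
    have htend' : Filter.Tendsto (slope (sAvg w₁) s) (nhdsWithin s (Ioi s)) (nhds (P s)) :=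
      htend.mono_left (nhdsWithin_mono s (fun y hy => ne_of_gt hy))
    refine le_of_tendsto htend' ?_
    filter_upwards [Ioo_mem_nhdsGT_of_mem ⟨le_refl s, hs.2⟩] with y hy
    have h1 : sAvg w₁ y ≤ sAvg w₁ s :=
      (hmono s ⟨hs.1, hs.2.le⟩ y ⟨hs.1.trans hy.1, hy.2.le⟩ hy.1.le).1
    rw [slope_def_field]
    exact div_nonpos_iff.mpr (Or.inr ⟨sub_nonpos.2 h1, sub_nonneg.2 hy.1.le⟩)
  -- the function h s = s^(n-1) * P s and its derivative
  have hh : ∀ s ∈ Ioo (0:ℝ) 3,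
      HasDerivAt (fun r => r^(n-1) * P r) (-(s^(n-1) * sAvg w₂ s)) s := by
    intro s hs
    have hs0 : s ≠ 0 := ne_of_gt hs.1
    have h1 : HasDerivAt (fun r : ℝ => r^(n-1)) (((n:ℝ)-1) * s^(n-2)) s := by
      have := hasDerivAt_pow (n-1) s
      have hcast : ((n-1 : ℕ) : ℝ) = (n:ℝ)-1 := by
        have : (1:ℕ) ≤ n := by omega
        push_cast [Nat.cast_sub this]
        ring
      have hexp : n - 1 - 1 = n - 2 := by omega
      rwa [hcast, hexp] at this
    have h2 := h1.mul (hP s hs)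
    have heq : ((n:ℝ)-1) * s^(n-2) * P s + s^(n-1) * Q s = -(s^(n-1) * sAvg w₂ s) := by
      rw [hODE' s hs]
      have hpow : s^(n-1) = s^(n-2) * s := by
        rw [← pow_succ]
        congr 1
        omega
      field_simp [hpow]
      rw [hpow]; ring
    rwa [heq] at h2
  -- Step (A): h t ≤ - g t * t^n / n
  have hgt0 : 0 ≤ sAvg w₂ t := (hAvg t ⟨ht0, by linarith⟩).2
  have hstepA : t^(n-1) * P t ≤ -(sAvg w₂ t * t^n / n) := by
    set η : ℝ → ℝ := fun s => s^(n-1) * P s + sAvg w₂ t * s^n / n with hηdef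
    have hηd : ∀ s ∈ Ioo (0:ℝ) 3,
        HasDerivAt η (-(s^(n-1) * sAvg w₂ s) + sAvg w₂ t * s^(n-1)) s := by
      intro s hs
      have h1 : HasDerivAt (fun r : ℝ => sAvg w₂ t * r^n / n) (sAvg w₂ t * s^(n-1)) s := by
        have h2 := (hasDerivAt_pow n s).const_mul (sAvg w₂ t)
        have h3 := h2.div_const (n:ℝ)
        exact h3.congr_deriv (by rw [div_eq_iff hn0.ne']; ring)
      exact (hh s hs).add h1
    have hηanti : AntitoneOn η (Ioc (0:ℝ) t) := by
      apply antitoneOn_of_deriv_nonpos (convex_Ioc 0 t)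
      · intro s hs
        exact (hηd s ⟨hs.1, lt_of_le_of_lt hs.2 ht3⟩).continuousAt.continuousWithinAt
      · rw [interior_Ioc]
        intro s hs
        exact ((hηd s ⟨hs.1, by linarith [hs.2]⟩).differentiableAt).differentiableWithinAt
      · rw [interior_Ioc]
        intro s hs
        have hsIoo : s ∈ Ioo (0:ℝ) 3 := ⟨hs.1, by linarith [hs.2]⟩
        rw [(hηd s hsIoo).deriv]
        have hgs : sAvg w₂ t ≤ sAvg w₂ s :=
          (hmono s ⟨hs.1, by linarith [hs.2]⟩ t ⟨ht0, by linarith⟩ hs.2.le).2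
        nlinarith [mul_nonneg (pow_nonneg hs.1.le (n-1))
          (by linarith : (0:ℝ) ≤ sAvg w₂ s - sAvg w₂ t)]
    have hηt : ∀ ε ∈ Ioo (0:ℝ) t, η t ≤ sAvg w₂ t * ε^n / n := by
      intro ε hε
      have h1 := hηanti ⟨hε.1, hε.2.le⟩ ⟨ht0, le_refl t⟩ hε.2.le
      have h2 : ε^(n-1) * P ε ≤ 0 :=
        mul_nonpos_iff.mpr (Or.inl ⟨pow_nonneg hε.1.le _, hp_nonpos ε ⟨hε.1, by linarith [hε.2]⟩⟩)
      have h3 : η ε ≤ sAvg w₂ t * ε^n / n := by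
        rw [hηdef]; dsimp only; linarith
      exact le_trans h1 h3
    have htendlim : Filter.Tendsto (fun ε : ℝ => sAvg w₂ t * ε^n / n)
        (nhdsWithin 0 (Ioi 0)) (nhds 0) := by
      have hcont : Filter.Tendsto (fun ε : ℝ => sAvg w₂ t * ε^n / n) (nhds 0)
          (nhds (sAvg w₂ t * (0:ℝ)^n / n)) := by
        exact ((continuous_const.mul (continuous_pow n)).div_const (n:ℝ)).tendsto 0
      rw [zero_pow (by omega : n ≠ 0), mul_zero, zero_div] at hcont
      exact hcont.mono_left nhdsWithin_le_nhds
    have h4 : η t ≤ 0 := by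
      refine ge_of_tendsto htendlim ?_
      filter_upwards [Ioo_mem_nhdsGT_of_mem ⟨le_refl (0:ℝ), ht0⟩] with ε hε
      exact hηt ε hε
    rw [hηdef] at h4
    dsimp only at h4
    linarith
  -- Step (B): bound P on [t, 7/5 t]
  have h75 : (7/5:ℝ)*t < 3 := by linarith
  have hhanti : AntitoneOn (fun r => r^(n-1) * P r) (Ioc (0:ℝ) ((7/5)*t)) := by
    apply antitoneOn_of_deriv_nonpos (convex_Ioc _ _)
    · intro s hs
      exact (hh s ⟨hs.1, by linarith [hs.2]⟩).continuousAt.continuousWithinAt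
    · rw [interior_Ioc]
      intro s hs
      exact (hh s ⟨hs.1, by linarith [hs.2]⟩).differentiableAt.differentiableWithinAt
    · rw [interior_Ioc]
      intro s hs
      have hsIoo : s ∈ Ioo (0:ℝ) 3 := ⟨hs.1, by linarith [hs.2]⟩
      rw [(hh s hsIoo).deriv]
      have hg0 : 0 ≤ sAvg w₂ s := (hAvg s ⟨hs.1, by linarith [hs.2]⟩).2
      have h5 : 0 ≤ s^(n-1) * sAvg w₂ s := mul_nonneg (pow_nonneg hs.1.le _) hg0
      linarith
  set K : ℝ := sAvg w₂ t * t^n / ((n:ℝ) * ((7/5)*t)^(n-1)) with hKdef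
  have hPbound : ∀ s ∈ Icc t ((7/5)*t), P s ≤ -K := by
    intro s hs
    have hs0 : (0:ℝ) < s := lt_of_lt_of_le ht0 hs.1
    have hspow : (0:ℝ) < s^(n-1) := pow_pos hs0 _
    have h1 : s^(n-1) * P s ≤ t^(n-1) * P t :=
      hhanti ⟨ht0, by linarith⟩ ⟨hs0, hs.2⟩ hs.1
    have h2 : s^(n-1) * P s ≤ -(sAvg w₂ t * t^n / n) := le_trans h1 hstepA
    have hP2 : P s ≤ -(sAvg w₂ t * t^n / n) / s^(n-1) := by
      rw [le_div_iff₀ hspow, mul_comm]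
      exact h2
    have h75pow : (0:ℝ) < ((7/5)*t)^(n-1) := pow_pos (by linarith) _
    have hcmp : -(sAvg w₂ t * t^n / n) / s^(n-1)
        ≤ -(sAvg w₂ t * t^n / n) / ((7/5)*t)^(n-1) := by
      have hA : (0:ℝ) ≤ sAvg w₂ t * t^n / n := by positivity
      have hspow' : s^(n-1) ≤ ((7/5)*t)^(n-1) := pow_le_pow_left₀ hs0.le hs.2 _
      rw [neg_div, neg_div, neg_le_neg_iff]
      exact div_le_div_of_nonneg_left hA hspow hspow'
    have hKeq : -(sAvg w₂ t * t^n / n) / ((7/5)*t)^(n-1) = -K := by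
      rw [hKdef, neg_div, div_div]
    linarith [hP2, hcmp, hKeq.le]
  -- Step (C): integrate the bound on [t, 7/5 t]
  have hζd : ∀ s ∈ Ioo (0:ℝ) 3, HasDerivAt (fun r => sAvg w₁ r + K * r) (P s + K) s := by
    intro s hsIoo
    have h1 : HasDerivAt (fun r : ℝ => K * r) K s := by
      simpa using (hasDerivAt_id s).const_mul K
    exact (hf s hsIoo).add h1
  have hζanti : AntitoneOn (fun s => sAvg w₁ s + K * s) (Icc t ((7/5)*t)) := by
    apply antitoneOn_of_deriv_nonpos (convex_Icc _ _)
    · intro s hs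
      have hsIoo : s ∈ Ioo (0:ℝ) 3 := ⟨lt_of_lt_of_le ht0 hs.1, by linarith [hs.2]⟩
      exact (hζd s hsIoo).continuousAt.continuousWithinAt
    · rw [interior_Icc]
      intro s hs
      have hsIoo : s ∈ Ioo (0:ℝ) 3 := ⟨lt_of_lt_of_le ht0 hs.1.le, by linarith [hs.2]⟩
      exact (hζd s hsIoo).differentiableAt.differentiableWithinAt
    · rw [interior_Icc]
      intro s hs
      have hsIoo : s ∈ Ioo (0:ℝ) 3 := ⟨lt_of_lt_of_le ht0 hs.1.le, by linarith [hs.2]⟩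
      rw [(hζd s hsIoo).deriv]
      have := hPbound s ⟨hs.1.le, hs.2.le⟩
      linarith
  have hfinal := hζanti ⟨le_refl t, by linarith⟩ ⟨by linarith, le_refl ((7/5)*t)⟩ (by linarith)
  have hf75 : 0 ≤ sAvg w₁ ((7/5)*t) := (hAvg ((7/5)*t) ⟨by linarith, by linarith⟩).1
  -- final algebra
  have hKval : K = sAvg w₂ t * t / ((n:ℝ) * (7/5)^(n-1)) := by
    rw [hKdef, mul_pow]
    have hpowt : t^n = t^(n-1) * t := by
      rw [← pow_succ]
      congr 1
      omega
    have htpow : (0:ℝ) < t^(n-1) := pow_pos ht0 _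
    field_simp
    rw [hpowt]
    ring
  have hgoal : c * t^2 * sAvg w₂ t = (2/5) * t * K := by
    rw [hKval, hcdef]
    field_simp
  have hfinal' : sAvg w₁ ((7/5)*t) + K*((7/5)*t) ≤ sAvg w₁ t + K*t := hfinal
  rw [hgoal]
  linarith [hfinal', hf75]
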